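/- Let A be a real m × n matrix, b ∈ ℝ^m and c ∈ ℝ^n, and suppose the linear program LP(A,b,c): minimize cᵀx subject to Ax = b, x ≥ 0, has a unique optimal solution x*. Then there exists ε > 0 such that for every c' ∈ ℝ^n with ‖c' − c‖ < ε, x* is also an optimal solution of LP(A,b,c'); in particular, for every c' with ‖c' − c‖ < ε the perturbed linear program has an optimal solution whose support equals the support of x*. -/

import Mathlib

open Matrix

noncomputable section

/-- A feasible point of the standard form linear program `LP(A, b, c)`:
`A x = b` and `x ≥ 0` componentwise. -/
def IsFeasible {m n : ℕ} (A : Matrix (Fin m) (Fin n) ℝ) (b : Fin m → ℝ)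
    (x : Fin n → ℝ) : Prop :=
  A.mulVec x = b ∧ ∀ i, 0 ≤ x i

/-- An optimal solution of the standard form linear program `LP(A, b, c)`:
a feasible point minimizing `cᵀ x` over all feasible points. -/
def IsOptimalSolution {m n : ℕ} (A : Matrix (Fin m) (Fin n) ℝ) (b : Fin m → ℝ)
    (c : Fin n → ℝ) (x : Fin n → ℝ) : Prop :=
  IsFeasible A b x ∧ ∀ y : Fin n → ℝ, IsFeasible A b y → c ⬝ᵥ x ≤ c ⬝ᵥ y

/-- Stability of a linear program with respect to the cost vector: if
`LP(A, b, c)` has a unique optimal solution `x*`, then for all `c'` close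
enough to `c`, `x*` is still optimal for `LP(A, b, c')`; in particular the
perturbed program has an optimal solution whose support equals that of `x*`. -/
theorem lp_stability_cost
    {m n : ℕ} (A : Matrix (Fin m) (Fin n) ℝ) (b : Fin m → ℝ) (c : Fin n → ℝ)
    (xstar : Fin n → ℝ) (hopt : IsOptimalSolution A b c xstar)
    (huniq : ∀ y : Fin n → ℝ, IsOptimalSolution A b c y → y = xstar) :
    ∃ ε > (0 : ℝ), ∀ c' : Fin n → ℝ, ‖c' - c‖ < ε →
      IsOptimalSolution A b c' xstar ∧
      ∃ x' : Fin n → ℝ, IsOptimalSolution A b c' x' ∧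
        {i | x' i ≠ 0} = {i | xstar i ≠ 0} := by
  obtain ⟨hfeas, hmin⟩ := hopt
  -- Key: the objective is strictly positive on nonzero feasible directions
  have hC_pos : ∀ d : Fin n → ℝ, A.mulVec d = 0 → (∀ i, xstar i = 0 → 0 ≤ d i) →
      d ≠ 0 → 0 < c ⬝ᵥ d := by
    intro d hAd hdpos hdne
    obtain ⟨i0, hi0⟩ : ∃ i, d i ≠ 0 := by
      by_contra h
      push_neg at h
      exact hdne (funext h)
    haveI : Nonempty (Fin n) := ⟨i0⟩
    have hd1 : (0:ℝ) < ‖d‖ + 1 := by positivity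
    set t : ℝ := Finset.univ.inf' Finset.univ_nonempty
      (fun i => if xstar i = 0 then 1 else xstar i / (‖d‖ + 1)) with ht
    have htpos : 0 < t := by
      rw [ht, Finset.lt_inf'_iff]
      intro i _
      by_cases h0 : xstar i = 0
      · simp [h0]
      · have hxi : 0 < xstar i := lt_of_le_of_ne (hfeas.2 i) (Ne.symm h0)
        simp only [h0, if_false]
        positivity
    have hfeas_t : IsFeasible A b (xstar + t • d) := by
      constructor
      · rw [mulVec_add, mulVec_smul, hAd, smul_zero, add_zero, hfeas.1]
      · intro i
        simp only [Pi.add_apply, Pi.smul_apply, smul_eq_mul]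
        by_cases h0 : xstar i = 0
        · have := hdpos i h0
          nlinarith
        · have hxi : 0 < xstar i := lt_of_le_of_ne (hfeas.2 i) (Ne.symm h0)
          have hti : t ≤ xstar i / (‖d‖ + 1) := by
            have := Finset.inf'_le (b := i)
              (fun i => if xstar i = 0 then (1:ℝ) else xstar i / (‖d‖ + 1))
              (Finset.mem_univ i)
            rw [if_neg h0] at this
            rw [ht]; exact this
          have hdi : -(‖d‖ + 1) ≤ d i := by
            have h := norm_le_pi_norm d i
            rw [Real.norm_eq_abs] at h
            have := (abs_le.mp h).1
            linarith
          have : t * (‖d‖ + 1) ≤ xstar i := (le_div_iff₀ hd1).mp hti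
          nlinarith
    have hle := hmin _ hfeas_t
    rw [dotProduct_add, dotProduct_smul, smul_eq_mul] at hle
    have hc0 : 0 ≤ c ⬝ᵥ d := by nlinarith
    rcases eq_or_lt_of_le hc0 with heq | h
    · exfalso
      have hyopt : IsOptimalSolution A b c (xstar + t • d) := by
        refine ⟨hfeas_t, fun z hz => ?_⟩
        rw [dotProduct_add, dotProduct_smul, smul_eq_mul, ← heq, mul_zero, add_zero]
        exact hmin z hz
      have heqx := huniq _ hyopt
      have : t • d = 0 := by
        have := congrArg (fun v => v - xstar) heqx
        simpa [add_sub_cancel_left] using this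
      rcases smul_eq_zero.mp this with h | h
      · exact htpos.ne' h
      · exact hdne h
    · exact h
  -- The set of unit-norm feasible directions
  set S : Set (Fin n → ℝ) :=
    {d | A.mulVec d = 0 ∧ (∀ i, xstar i = 0 → 0 ≤ d i) ∧ ‖d‖ = 1} with hS
  have hclosed : IsClosed S := by
    have h1 : IsClosed {d : Fin n → ℝ | A.mulVec d = 0} := by
      have hcont : Continuous fun d : Fin n → ℝ => A.mulVec d := by
        have := LinearMap.continuous_of_finiteDimensional (A.mulVecLin)
        simpa [Matrix.coe_mulVecLin] using this
      exact isClosed_eq hcont continuous_const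
    have h2 : IsClosed {d : Fin n → ℝ | ∀ i, xstar i = 0 → 0 ≤ d i} := by
      have : {d : Fin n → ℝ | ∀ i, xstar i = 0 → 0 ≤ d i}
          = ⋂ i, {d : Fin n → ℝ | xstar i = 0 → 0 ≤ d i} := by
        ext d; simp
      rw [this]
      refine isClosed_iInter fun i => ?_
      by_cases h0 : xstar i = 0
      · have : {d : Fin n → ℝ | xstar i = 0 → 0 ≤ d i} = {d : Fin n → ℝ | 0 ≤ d i} := by
          ext d; simp [h0]
        rw [this]
        exact isClosed_le continuous_const (continuous_apply i)
      · have : {d : Fin n → ℝ | xstar i = 0 → 0 ≤ d i} = Set.univ := by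
          ext d; simp [h0]
        rw [this]; exact isClosed_univ
    have h3 : IsClosed {d : Fin n → ℝ | ‖d‖ = 1} := isClosed_eq continuous_norm continuous_const
    have : S = {d : Fin n → ℝ | A.mulVec d = 0} ∩
        ({d : Fin n → ℝ | ∀ i, xstar i = 0 → 0 ≤ d i} ∩ {d : Fin n → ℝ | ‖d‖ = 1}) := by
      ext d; simp [hS, Set.mem_setOf_eq, and_assoc]
    rw [this]
    exact h1.inter (h2.inter h3)
  have hScompact : IsCompact S := by
    refine (isCompact_closedBall (0 : Fin n → ℝ) 1).of_isClosed_subset hclosed ?_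
    intro d hd
    simp only [Metric.mem_closedBall, dist_zero_right]
    exact le_of_eq hd.2.2
  obtain ⟨δ, hδpos, hδ⟩ : ∃ δ : ℝ, 0 < δ ∧ ∀ d ∈ S, δ ≤ c ⬝ᵥ d := by
    rcases S.eq_empty_or_nonempty with hSe | hSne
    · exact ⟨1, one_pos, by simp [hSe]⟩
    · have hcont : Continuous fun d : Fin n → ℝ => c ⬝ᵥ d := by
        refine continuous_finset_sum _ fun i _ => ?_
        exact continuous_const.mul (continuous_apply i)
      obtain ⟨d0, hd0S, hd0min⟩ := hScompact.exists_isMinOn hSne hcont.continuousOn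
      refine ⟨c ⬝ᵥ d0, ?_, fun d hd => (isMinOn_iff.mp hd0min) d hd⟩
      refine hC_pos d0 hd0S.1 hd0S.2.1 ?_
      intro h
      rw [h] at hd0S
      simpa using hd0S.2.2
  -- linear growth on the cone
  have hkey : ∀ d : Fin n → ℝ, A.mulVec d = 0 → (∀ i, xstar i = 0 → 0 ≤ d i) →
      δ * ‖d‖ ≤ c ⬝ᵥ d := by
    intro d hAd hdpos
    rcases eq_or_ne d 0 with rfl | hdne
    · simp
    · have hnorm : 0 < ‖d‖ := norm_pos_iff.mpr hdne
      have hmem : (‖d‖⁻¹ • d) ∈ S := by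
        refine ⟨?_, ?_, ?_⟩
        · rw [mulVec_smul, hAd, smul_zero]
        · intro i hi
          simp only [Pi.smul_apply, smul_eq_mul]
          exact mul_nonneg (inv_nonneg.mpr hnorm.le) (hdpos i hi)
        · rw [norm_smul, norm_inv, norm_norm, inv_mul_cancel₀ hnorm.ne']
      have h := hδ _ hmem
      rw [dotProduct_smul, smul_eq_mul] at h
      have hinv : ‖d‖⁻¹ * ‖d‖ = 1 := inv_mul_cancel₀ hnorm.ne'
      have h7 := mul_le_mul_of_nonneg_right h hnorm.le
      have h8 : ‖d‖⁻¹ * c ⬝ᵥ d * ‖d‖ = c ⬝ᵥ d := by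
        calc ‖d‖⁻¹ * c ⬝ᵥ d * ‖d‖ = (‖d‖⁻¹ * ‖d‖) * (c ⬝ᵥ d) := by ring
          _ = c ⬝ᵥ d := by rw [hinv, one_mul]
      linarith
  -- dot product bound w.r.t. sup norm
  have hdot : ∀ u d : Fin n → ℝ, |u ⬝ᵥ d| ≤ (n : ℝ) * ‖u‖ * ‖d‖ := by
    intro u d
    have : u ⬝ᵥ d = ∑ i, u i * d i := rfl
    rw [this]
    calc |∑ i, u i * d i| ≤ ∑ i, |u i * d i| := Finset.abs_sum_le_sum_abs _ _
      _ ≤ ∑ _i : Fin n, ‖u‖ * ‖d‖ := by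
          refine Finset.sum_le_sum fun i _ => ?_
          rw [abs_mul]
          have hu : |u i| ≤ ‖u‖ := by
            have := norm_le_pi_norm u i; rwa [Real.norm_eq_abs] at this
          have hd : |d i| ≤ ‖d‖ := by
            have := norm_le_pi_norm d i; rwa [Real.norm_eq_abs] at this
          exact mul_le_mul hu hd (abs_nonneg _) (norm_nonneg _)
      _ = (n : ℝ) * ‖u‖ * ‖d‖ := by
          simp [Finset.sum_const, Finset.card_univ, mul_assoc]
  refine ⟨δ / (n + 1), by positivity, fun c' hc' => ?_⟩
  have hopt' : IsOptimalSolution A b c' xstar := by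
    refine ⟨hfeas, fun y hy => ?_⟩
    set d : Fin n → ℝ := y - xstar with hd
    have hdC1 : A.mulVec d = 0 := by
      rw [hd, mulVec_sub, hy.1, hfeas.1, sub_self]
    have hdC2 : ∀ i, xstar i = 0 → 0 ≤ d i := by
      intro i hi
      have := hy.2 i
      simp [hd, hi, this]
    have h1 := hkey d hdC1 hdC2
    have h2 := (abs_le.mp (hdot (c' - c) d)).1
    have h3 : c' ⬝ᵥ y - c' ⬝ᵥ xstar = c ⬝ᵥ d + (c' - c) ⬝ᵥ d := by
      rw [hd]
      simp only [dotProduct_sub, sub_dotProduct]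
      ring
    have hc'' : ‖c' - c‖ * ((n : ℝ) + 1) < δ := by
      have hn1 : (0:ℝ) < (n : ℝ) + 1 := by positivity
      exact (lt_div_iff₀ hn1).mp hc'
    have h5 : (n : ℝ) * ‖c' - c‖ ≤ δ := by
      have := norm_nonneg (c' - c)
      nlinarith
    have h6 : (n : ℝ) * ‖c' - c‖ * ‖d‖ ≤ δ * ‖d‖ :=
      mul_le_mul_of_nonneg_right h5 (norm_nonneg d)
    linarith
  exact ⟨hopt', xstar, hopt', rfl⟩
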